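/- For any nonnegative integrable f on ℝ^d with finite second moment I > 0, mass M > 0 and finite entropy, one has ∫ f log f + (dM/2)(log I + 1) ≥ M log M + (dM/2) log(dM/(2π)). -/

import Mathlib

open MeasureTheory Real

private lemma gibbs_pointwise (t s : ℝ) (ht : 0 ≤ t) (hs : 0 < s) :
    t * Real.log s + t - s ≤ t * Real.log t := by
  rcases eq_or_lt_of_le ht with h | h
  · simp [← h]
    linarith
  · have h1 : Real.log (s / t) ≤ s / t - 1 :=
      Real.log_le_sub_one_of_pos (by positivity)
    rw [Real.log_div hs.ne' h.ne'] at h1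
    have h2 := mul_le_mul_of_nonneg_left h1 ht
    have h3 : t * (s / t - 1) = s - t := by field_simp
    nlinarith

private lemma integrable_gauss (d : ℕ) {δ : ℝ} (hδ : 0 < δ) :
    Integrable (fun x : EuclideanSpace ℝ (Fin d) => Real.exp (-δ * ‖x‖ ^ 2)) := by
  have hc : Integrable (fun x : EuclideanSpace ℝ (Fin d) =>
      Complex.exp (-(δ : ℂ) * (‖x‖ : ℂ) ^ 2 + 0 * (inner ℝ (0 : EuclideanSpace ℝ (Fin d)) x : ℝ))) :=
    GaussianFourier.integrable_cexp_neg_mul_sq_norm_add (by simpa using hδ) 0 0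
  have := hc.re
  refine this.congr (Filter.Eventually.of_forall fun x => ?_)
  have : (-(δ : ℂ) * (‖x‖ : ℂ) ^ 2 + 0 * (inner ℝ (0 : EuclideanSpace ℝ (Fin d)) x : ℝ))
      = ((-δ * ‖x‖ ^ 2 : ℝ) : ℂ) := by push_cast; ring
  simp only [this, ← Complex.ofReal_exp]
  simp
  rw [← Complex.ofReal_pow, ← Complex.ofReal_mul, ← Complex.ofReal_neg, ← Complex.ofReal_exp,
    Complex.ofReal_re]

/-- Entropy lower bound, optimized form (Lemma 2.1, inequality (est:entropy2)). -/
theorem entropy_lower_bound_optimized (d : ℕ) (hd : 1 ≤ d)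
    (f : EuclideanSpace ℝ (Fin d) → ℝ)
    (hf_nonneg : ∀ x, 0 ≤ f x)
    (hf_int : Integrable f)
    (hI_int : Integrable (fun x => ‖x‖ ^ 2 * f x))
    (hent_int : Integrable (fun x => f x * Real.log (f x)))
    (M I : ℝ)
    (hM : M = ∫ x, f x) (hMpos : 0 < M)
    (hI : I = ∫ x, ‖x‖ ^ 2 * f x) (hIpos : 0 < I) :
    M * Real.log M + ((d : ℝ) * M / 2) * Real.log ((d : ℝ) * M / (2 * Real.pi))
      ≤ (∫ x, f x * Real.log (f x)) + ((d : ℝ) * M / 2) * (Real.log I + 1) := by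
  have hd0 : (0 : ℝ) < d := by exact_mod_cast hd
  set δ : ℝ := (d : ℝ) * M / (2 * I) with hδdef
  have hδ : 0 < δ := by positivity
  set S : ℝ := (Real.pi / δ) ^ ((d : ℝ) / 2) with hSdef
  have hS : 0 < S := Real.rpow_pos_of_pos (by positivity) _
  set c : ℝ := M / S with hcdef
  have hc : 0 < c := by positivity
  -- Gaussian integral
  have hgauss : Integrable (fun x : EuclideanSpace ℝ (Fin d) => Real.exp (-δ * ‖x‖ ^ 2)) :=
    integrable_gauss d hδ
  have hSint : (∫ x : EuclideanSpace ℝ (Fin d), Real.exp (-δ * ‖x‖ ^ 2)) = S := by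
    rw [GaussianFourier.integral_rexp_neg_mul_sq_norm hδ]
    simp [hSdef, finrank_euclideanSpace_fin]
  -- the comparison function
  set g : EuclideanSpace ℝ (Fin d) → ℝ :=
    fun x => (Real.log c + 1) * f x - δ * (‖x‖ ^ 2 * f x) - c * Real.exp (-δ * ‖x‖ ^ 2)
    with hgdef
  have hg_int : Integrable g :=
    ((hf_int.const_mul _).sub (hI_int.const_mul _)).sub (hgauss.const_mul _)
  have hg_val : (∫ x, g x) = (Real.log c + 1) * M - δ * I - c * S := by
    have h1 : Integrable (fun x : EuclideanSpace ℝ (Fin d) =>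
        (Real.log c + 1) * f x - δ * (‖x‖ ^ 2 * f x)) :=
      (hf_int.const_mul _).sub (hI_int.const_mul _)
    rw [hgdef]
    rw [integral_sub h1 (hgauss.const_mul _),
      integral_sub (hf_int.const_mul _) (hI_int.const_mul _),
      integral_const_mul, integral_const_mul, integral_const_mul, hSint, hM, hI]
  have hpt : ∀ x, g x ≤ f x * Real.log (f x) := by
    intro x
    have hs : 0 < c * Real.exp (-δ * ‖x‖ ^ 2) := by positivity
    have hlogs : Real.log (c * Real.exp (-δ * ‖x‖ ^ 2)) = Real.log c + (-δ * ‖x‖ ^ 2) := by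
      rw [Real.log_mul hc.ne' (Real.exp_pos _).ne', Real.log_exp]
    have haux := gibbs_pointwise (f x) (c * Real.exp (-δ * ‖x‖ ^ 2)) (hf_nonneg x) hs
    rw [hlogs] at haux
    have : g x = f x * (Real.log c + (-δ * ‖x‖ ^ 2)) + f x - c * Real.exp (-δ * ‖x‖ ^ 2) := by
      rw [hgdef]; ring
    linarith [haux, this.le, this.ge]
  have hE : (∫ x, g x) ≤ ∫ x, f x * Real.log (f x) := integral_mono hg_int hent_int hpt
  rw [hg_val] at hE
  -- arithmetic
  have hcS : c * S = M := by rw [hcdef]; field_simp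
  have hδI : δ * I = (d : ℝ) * M / 2 := by
    rw [hδdef]; field_simp
  have hlogc : Real.log c = Real.log M - ((d : ℝ) / 2) * (Real.log Real.pi - Real.log δ) := by
    rw [hcdef, Real.log_div hMpos.ne' hS.ne', hSdef,
      Real.log_rpow (by positivity), Real.log_div Real.pi_pos.ne' hδ.ne']
  have hlogδ : Real.log δ =
      Real.log d + Real.log M - (Real.log 2 + Real.log I) := by
    rw [hδdef, Real.log_div (by positivity) (by positivity),
      Real.log_mul hd0.ne' hMpos.ne', Real.log_mul two_ne_zero hIpos.ne']
  have hlogdm : Real.log ((d : ℝ) * M / (2 * Real.pi)) =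
      Real.log d + Real.log M - (Real.log 2 + Real.log Real.pi) := by
    rw [Real.log_div (by positivity) (by positivity),
      Real.log_mul hd0.ne' hMpos.ne', Real.log_mul two_ne_zero Real.pi_pos.ne']
  have heq : M * Real.log M + ((d : ℝ) * M / 2) * Real.log ((d : ℝ) * M / (2 * Real.pi))
      - ((d : ℝ) * M / 2) * (Real.log I + 1)
      = (Real.log c + 1) * M - δ * I - M := by
    rw [hlogc, hlogδ, hlogdm, hδI]; ring
  linarith [hE, heq, hcS]
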